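/- arXiv:1610.07662 — 3 statements merged into one kernel-verified Lean document; each statement's English description precedes it below -/
import Mathlib

section
/- Let p ∈ ℝ^d be a probability vector with positive entries, and let ρ_n be a sequence of positive reals with ρ_n → ∞. With Σ_ρ = Diag(p) - p pᵀ + (1/ρ) I_d and P = I_d - (1/d) 𝟙 𝟙ᵀ, the matrices P Σ_{ρ_n}^{-1} P converge entrywise to P Diag(p)^{-1} P. -/
open Matrix Filter

lemma diag_mul_vmv {d : ℕ} (g a b : Fin d → ℝ) :
    Matrix.diagonal g * Matrix.vecMulVec a b = Matrix.vecMulVec (fun i => g i * a i) b := by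
  ext i j; simp [Matrix.diagonal_mul, Matrix.vecMulVec_apply, mul_assoc]

lemma vmv_mul_diag {d : ℕ} (g a b : Fin d → ℝ) :
    Matrix.vecMulVec a b * Matrix.diagonal g = Matrix.vecMulVec a (fun j => b j * g j) := by
  ext i j; simp [Matrix.mul_diagonal, Matrix.vecMulVec_apply, mul_assoc]

lemma vmv_mul_vmv {d : ℕ} (a b c e : Fin d → ℝ) :
    Matrix.vecMulVec a b * Matrix.vecMulVec c e
      = (∑ k, b k * c k) • Matrix.vecMulVec a e := by
  ext i j
  simp [Matrix.mul_apply, Matrix.vecMulVec_apply, Finset.mul_sum, Finset.sum_mul]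
  ring_nf
  congr 1; ext k; ring


lemma proj_vmv {d : ℕ} (a b : Fin d → ℝ) (c : ℝ) :
    (1 - c • Matrix.vecMulVec (fun _ => (1:ℝ)) (fun _ => (1:ℝ))) * Matrix.vecMulVec a b *
      (1 - c • Matrix.vecMulVec (fun _ => (1:ℝ)) (fun _ => (1:ℝ)))
    = Matrix.vecMulVec (fun i => a i - c * ∑ k, a k) (fun j => b j - c * ∑ k, b k) := by
  have h2 : (1 - c • Matrix.vecMulVec (fun _ => (1:ℝ)) (fun _ => (1:ℝ))) * Matrix.vecMulVec a b
      = Matrix.vecMulVec (fun i => a i - c * ∑ k, a k) b := by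
    rw [sub_mul, one_mul, Matrix.smul_mul, vmv_mul_vmv]
    ext i j
    simp [Matrix.vecMulVec_apply, Matrix.sub_apply, Matrix.smul_apply]
    ring
  rw [h2, mul_sub, mul_one, Matrix.mul_smul, vmv_mul_vmv]
  ext i j
  simp [Matrix.vecMulVec_apply, Matrix.sub_apply, Matrix.smul_apply]
  ring

lemma PMP_formula {d : ℕ} (hd : 0 < d) (p : Fin d → ℝ) (hp0 : ∀ i, 0 < p i)
    (e : ℝ) (he : 0 < e) (i j : Fin d) :
    ((1 - (1/(d:ℝ)) • Matrix.vecMulVec (fun _ => (1:ℝ)) (fun _ => (1:ℝ))) *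
      (Matrix.diagonal (fun i => (p i + e)⁻¹) +
        ((e * ∑ k, p k * (p k + e)⁻¹)⁻¹) •
          Matrix.vecMulVec (fun i => p i * (p i + e)⁻¹) (fun i => p i * (p i + e)⁻¹)) *
      (1 - (1/(d:ℝ)) • Matrix.vecMulVec (fun _ => (1:ℝ)) (fun _ => (1:ℝ))) :
      Matrix (Fin d) (Fin d) ℝ) i j
    = (∑ k, (1 - (1/(d:ℝ)) • Matrix.vecMulVec (fun _ => (1:ℝ)) (fun _ => (1:ℝ))) i k * (p k + e)⁻¹
          * (1 - (1/(d:ℝ)) • Matrix.vecMulVec (fun _ => (1:ℝ)) (fun _ => (1:ℝ))) k j)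
      + (e / (∑ k, p k * (p k + e)⁻¹))
          * ((p i + e)⁻¹ - (1/(d:ℝ)) * ∑ k, (p k + e)⁻¹)
          * ((p j + e)⁻¹ - (1/(d:ℝ)) * ∑ k, (p k + e)⁻¹) := by
  have hdne : (d:ℝ) ≠ 0 := Nat.cast_ne_zero.mpr hd.ne'
  set P : Matrix (Fin d) (Fin d) ℝ :=
    1 - (1/(d:ℝ)) • Matrix.vecMulVec (fun _ => (1:ℝ)) (fun _ => (1:ℝ)) with hP
  set w : Fin d → ℝ := fun i => (p i + e)⁻¹ with hw
  set q : Fin d → ℝ := fun i => p i * w i with hq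
  have hpe : ∀ k, p k + e ≠ 0 := fun k => by have := hp0 k; positivity
  have hs : (0:ℝ) < ∑ k, p k * w k := by
    apply Finset.sum_pos
    · intro k _
      have h1 : 0 < w k := by have := hp0 k; simp only [hw]; positivity
      exact mul_pos (hp0 k) h1
    · exact Finset.univ_nonempty_iff.mpr ⟨i⟩
  set s : ℝ := ∑ k, p k * w k with hsdef
  -- split product
  have hsplit : P * (Matrix.diagonal w + (e*s)⁻¹ • Matrix.vecMulVec q q) * P
      = P * Matrix.diagonal w * P + (e*s)⁻¹ • (P * Matrix.vecMulVec q q * P) := by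
    rw [mul_add, add_mul, Matrix.mul_smul, Matrix.smul_mul]
  rw [hsplit, hP, proj_vmv]
  -- u = -e • v
  have hu : ∀ k, q k - (1/(d:ℝ)) * ∑ l, q l
      = -e * (w k - (1/(d:ℝ)) * ∑ l, w l) := by
    intro k
    have hq1 : ∀ l, q l = 1 - e * w l := by
      intro l
      have : (p l + e) * w l = 1 := mul_inv_cancel₀ (hpe l)
      simp only [hq]; linarith
    rw [hq1 k, Finset.sum_congr rfl fun l _ => hq1 l, Finset.sum_sub_distrib]
    simp [Finset.mul_sum, mul_sub, Finset.card_univ]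
    field_simp
    ring
  -- entrywise finish
  simp only [Matrix.add_apply, Matrix.mul_apply, Matrix.mul_diagonal, Matrix.smul_apply,
    Matrix.vecMulVec_apply, smul_eq_mul]
  congr 1
  · apply Finset.sum_congr rfl
    intro k _
    rw [Finset.sum_eq_single k]
    · simp [Matrix.diagonal_apply]; left; left; rfl
    · intro b _ hb; exact mul_eq_zero_of_right _ (Matrix.diagonal_apply_ne _ hb)
    · intro h; simp at h
  · rw [hu i, hu j]
    have hsne : s ≠ 0 := hs.ne'
    have hene : e ≠ 0 := he.ne'
    field_simp
    ring

lemma invS {d : ℕ} (hd : 0 < d) (p : Fin d → ℝ) (hp0 : ∀ i, 0 < p i) (hp1 : ∑ i, p i = 1)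
    (e : ℝ) (he : 0 < e) :
    (Matrix.diagonal p - Matrix.vecMulVec p p + e • (1 : Matrix (Fin d) (Fin d) ℝ)) *
      (Matrix.diagonal (fun i => (p i + e)⁻¹) +
        ((e * ∑ k, p k * (p k + e)⁻¹)⁻¹) •
          Matrix.vecMulVec (fun i => p i * (p i + e)⁻¹) (fun i => p i * (p i + e)⁻¹)) = 1 := by
  have hne : Nonempty (Fin d) := Fin.pos_iff_nonempty.mp hd
  set w : Fin d → ℝ := fun i => (p i + e)⁻¹ with hw
  set q : Fin d → ℝ := fun i => p i * w i with hq
  have hpe : ∀ i, p i + e ≠ 0 := fun i => by have := hp0 i; positivity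
  have hs : (0:ℝ) < ∑ k, p k * w k := by
    apply Finset.sum_pos
    · intro k _
      have h1 : 0 < w k := by have := hp0 k; simp only [hw]; positivity
      exact mul_pos (hp0 k) h1
    · exact Finset.univ_nonempty
  set s : ℝ := ∑ k, p k * w k with hsdef
  have hes : e * s ≠ 0 := by positivity
  -- rewrite first factor as diagonal (p+e) - vecMulVec p p
  have h1 : Matrix.diagonal p - Matrix.vecMulVec p p + e • (1 : Matrix (Fin d) (Fin d) ℝ)
      = Matrix.diagonal (fun i => p i + e) - Matrix.vecMulVec p p := by
    have : (e • (1 : Matrix (Fin d) (Fin d) ℝ)) = Matrix.diagonal (fun _ => e) := by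
      ext i j
      simp [Matrix.diagonal_apply, Matrix.one_apply]
    rw [this, ← Matrix.diagonal_add]; abel_nf
  rw [h1]
  -- key scalar identity : e * s = 1 - ∑ p k * q k
  have hkey : e * s = 1 - ∑ k, p k * q k := by
    have : ∀ k, p k * q k = p k - p k * (e * w k) := by
      intro k
      have hwk : (p k + e) * w k = 1 := mul_inv_cancel₀ (hpe k)
      simp only [hq]
      linear_combination p k * hwk
    rw [Finset.sum_congr rfl fun k _ => this k, Finset.sum_sub_distrib, hp1]
    simp only [hsdef, Finset.mul_sum]
    ring_nf
  have hdw : Matrix.diagonal (fun i => p i + e) * Matrix.diagonal w = 1 := by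
    rw [Matrix.diagonal_mul_diagonal,
      show (fun i => (p i + e) * w i) = fun _ => (1:ℝ) from funext fun i => mul_inv_cancel₀ (hpe i),
      Matrix.diagonal_one]
  rw [mul_add, sub_mul, sub_mul, Matrix.mul_smul, Matrix.mul_smul, hdw,
    diag_mul_vmv, vmv_mul_diag, vmv_mul_vmv]
  have hgq : (fun i => (p i + e) * q i) = p := by
    ext i
    show (p i + e) * (p i * (p i + e)⁻¹) = p i
    rw [mul_comm (p i) _, ← mul_assoc, mul_inv_cancel₀ (hpe i), one_mul]
  have hpw : (fun j => p j * w j) = q := rfl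
  rw [hgq, hpw]
  rw [smul_smul]
  have hcoef : (e * s)⁻¹ * (∑ k, p k * q k) = (e * s)⁻¹ - 1 := by
    rw [show (∑ k, p k * q k) = 1 - e * s by linarith [hkey]]
    field_simp
  rw [hcoef, sub_smul, one_smul]
  abel


theorem projected_inverse_limit (d : ℕ) (hd : 0 < d) (p : Fin d → ℝ)
    (hp0 : ∀ i, 0 < p i) (hp1 : ∑ i, p i = 1) (ρ : ℕ → ℝ)
    (hρpos : ∀ n, 0 < ρ n) (hρ : Tendsto ρ atTop atTop) :
    let S : ℝ → Matrix (Fin d) (Fin d) ℝ := fun r =>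
      Matrix.diagonal p - Matrix.vecMulVec p p + (1 / r) • (1 : Matrix (Fin d) (Fin d) ℝ)
    let P : Matrix (Fin d) (Fin d) ℝ :=
      1 - (1 / (d : ℝ)) • Matrix.vecMulVec (fun _ => 1) (fun _ => 1)
    ∀ i j, Tendsto (fun n => (P * (S (ρ n))⁻¹ * P) i j) atTop
      (nhds ((P * Matrix.diagonal (fun i => (p i)⁻¹) * P) i j)) := by
  intro S P i j
  have hdne : (d:ℝ) ≠ 0 := Nat.cast_ne_zero.mpr hd.ne'
  set E : ℕ → ℝ := fun n => 1 / ρ n with hE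
  have hE0 : ∀ n, 0 < E n := fun n => by have := hρpos n; simp [hE]; positivity
  have hElim : Tendsto E atTop (nhds 0) := by
    simpa [hE, one_div, Function.comp_def] using tendsto_inv_atTop_zero.comp hρ
  -- inverse formula
  have hSinv : ∀ n, (S (ρ n))⁻¹
      = Matrix.diagonal (fun i => (p i + E n)⁻¹) +
        ((E n * ∑ k, p k * (p k + E n)⁻¹)⁻¹) •
          Matrix.vecMulVec (fun i => p i * (p i + E n)⁻¹) (fun i => p i * (p i + E n)⁻¹) :=
    fun n => Matrix.inv_eq_right_inv (invS hd p hp0 hp1 (E n) (hE0 n))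
  -- entrywise formula
  have hfun : ∀ n, (P * (S (ρ n))⁻¹ * P) i j
      = (∑ k, P i k * (p k + E n)⁻¹ * P k j)
        + (E n / (∑ k, p k * (p k + E n)⁻¹))
            * ((p i + E n)⁻¹ - (1/(d:ℝ)) * ∑ k, (p k + E n)⁻¹)
            * ((p j + E n)⁻¹ - (1/(d:ℝ)) * ∑ k, (p k + E n)⁻¹) := by
    intro n
    rw [hSinv n]
    exact PMP_formula hd p hp0 (E n) (hE0 n) i j
  have htarget : (P * Matrix.diagonal (fun i => (p i)⁻¹) * P) i j
      = ∑ k, P i k * (p k)⁻¹ * P k j := by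
    simp only [Matrix.mul_apply]
    apply Finset.sum_congr rfl
    intro k _
    rw [Finset.sum_eq_single k]
    · simp [Matrix.diagonal_apply]
    · intro b _ hb; exact mul_eq_zero_of_right _ (Matrix.diagonal_apply_ne _ hb)
    · intro h; simp at h
  -- individual limits
  have hw : ∀ k : Fin d, Tendsto (fun n => (p k + E n)⁻¹) atTop (nhds ((p k)⁻¹)) := by
    intro k
    have h1 : Tendsto (fun n => p k + E n) atTop (nhds (p k)) := by
      simpa using tendsto_const_nhds.add hElim
    exact h1.inv₀ (hp0 k).ne'
  have h1 : Tendsto (fun n => ∑ k, P i k * (p k + E n)⁻¹ * P k j) atTop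
      (nhds (∑ k, P i k * (p k)⁻¹ * P k j)) := by
    apply tendsto_finset_sum
    intro k _
    exact (tendsto_const_nhds.mul (hw k)).mul tendsto_const_nhds
  have hslim : Tendsto (fun n => ∑ k, p k * (p k + E n)⁻¹) atTop (nhds (d:ℝ)) := by
    have : Tendsto (fun n => ∑ k, p k * (p k + E n)⁻¹) atTop
        (nhds (∑ k : Fin d, p k * (p k)⁻¹)) :=
      tendsto_finset_sum _ fun k _ => tendsto_const_nhds.mul (hw k)
    have heq : (∑ k : Fin d, p k * (p k)⁻¹) = (d:ℝ) := by
      rw [Finset.sum_congr rfl fun k _ => mul_inv_cancel₀ (hp0 k).ne']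
      simp
    rwa [heq] at this
  have hdiv : Tendsto (fun n => E n / (∑ k, p k * (p k + E n)⁻¹)) atTop (nhds 0) := by
    have := hElim.div hslim hdne
    rw [zero_div] at this
    exact this
  have hv : ∀ l : Fin d, Tendsto (fun n => (p l + E n)⁻¹ - (1/(d:ℝ)) * ∑ k, (p k + E n)⁻¹)
      atTop (nhds ((p l)⁻¹ - (1/(d:ℝ)) * ∑ k, (p k)⁻¹)) := by
    intro l
    exact (hw l).sub (tendsto_const_nhds.mul (tendsto_finset_sum _ fun k _ => hw k))
  have h2 : Tendsto (fun n => (E n / (∑ k, p k * (p k + E n)⁻¹))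
      * ((p i + E n)⁻¹ - (1/(d:ℝ)) * ∑ k, (p k + E n)⁻¹)
      * ((p j + E n)⁻¹ - (1/(d:ℝ)) * ∑ k, (p k + E n)⁻¹)) atTop (nhds 0) := by
    simpa using (hdiv.mul (hv i)).mul (hv j)
  rw [tendsto_congr hfun, htarget, ← add_zero (∑ k, P i k * (p k)⁻¹ * P k j)]
  exact h1.add h2
end

section
/- Let p : Θ → ℝ^d be differentiable at θ with Jacobian ∇p(θ) ∈ ℝ^{d×k}, where p(θ) is always a probability vector, so 𝟙ᵀ ∇p(θ) = 0. Let ρ > 0, Σ_ρ(θ) = Diag(p(θ)) - p(θ)p(θ)ᵀ + (1/ρ)I_d, P = I_d - (1/d)𝟙𝟙ᵀ, C(θ) = P Σ_ρ(θ) P, M(θ) = Σ_ρ(θ)^{-1}, and Ȧ(θ) = P ∇p(θ). Then C(θ) M(θ) C(θ) = C(θ) and C(θ) M(θ) Ȧ(θ) = Ȧ(θ). -/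
open Matrix

theorem minchi_hypotheses_projected (d k : ℕ) (hd : 0 < d)
    (pθ : Fin d → ℝ) (hp0 : ∀ i, 0 ≤ pθ i) (hp1 : ∑ i, pθ i = 1)
    (J : Matrix (Fin d) (Fin k) ℝ) (hJ : ∀ j, ∑ i, J i j = 0)
    (ρ : ℝ) (hρ : 0 < ρ) :
    let Sρ : Matrix (Fin d) (Fin d) ℝ :=
      Matrix.diagonal pθ - Matrix.vecMulVec pθ pθ + (1 / ρ) • (1 : Matrix (Fin d) (Fin d) ℝ)
    let P : Matrix (Fin d) (Fin d) ℝ :=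
      1 - (1 / (d : ℝ)) • Matrix.vecMulVec (fun _ => 1) (fun _ => 1)
    let C : Matrix (Fin d) (Fin d) ℝ := P * Sρ * P
    let M : Matrix (Fin d) (Fin d) ℝ := Sρ⁻¹
    let A : Matrix (Fin d) (Fin k) ℝ := P * J
    C * M * C = C ∧ C * M * A = A := by
  intro Sρ P C M A
  set U : Matrix (Fin d) (Fin d) ℝ := Matrix.vecMulVec (fun _ => 1) (fun _ => 1) with hU
  -- Sρ * U = (1/ρ) • U
  have hSU : Sρ * U = (1 / ρ) • U := by
    ext i j
    simp only [Sρ, Matrix.mul_apply, Matrix.add_apply, Matrix.sub_apply, Matrix.smul_apply,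
      Matrix.vecMulVec_apply, Matrix.diagonal_apply, Matrix.one_apply, hU, smul_eq_mul,
      mul_one, one_mul]
    rw [Finset.sum_add_distrib, Finset.sum_sub_distrib]
    simp [Finset.sum_ite_eq, Finset.sum_ite_eq', mul_ite, mul_zero, mul_one,
      ← Finset.mul_sum, ← Finset.sum_mul, hp1]
  have hUS : U * Sρ = (1 / ρ) • U := by
    ext i j
    simp only [Sρ, Matrix.mul_apply, Matrix.add_apply, Matrix.sub_apply, Matrix.smul_apply,
      Matrix.vecMulVec_apply, Matrix.diagonal_apply, Matrix.one_apply, hU, smul_eq_mul,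
      mul_one, one_mul]
    rw [Finset.sum_add_distrib, Finset.sum_sub_distrib]
    simp [Finset.sum_ite_eq, Finset.sum_ite_eq', mul_ite, mul_zero, mul_one,
      ← Finset.mul_sum, ← Finset.sum_mul, hp1]
  have hUU : U * U = (d : ℝ) • U := by
    ext i j
    simp [Matrix.mul_apply, hU, Matrix.vecMulVec_apply]
  have hdne : (d : ℝ) ≠ 0 := Nat.cast_ne_zero.mpr hd.ne'
  -- P is idempotent
  have hP2 : P * P = P := by
    simp only [P, ← hU, sub_mul, mul_sub, one_mul, mul_one, Matrix.smul_mul, Matrix.mul_smul,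
      hUU, smul_smul, one_div]
    rw [show ((d:ℝ))⁻¹ * (((d:ℝ))⁻¹ * (d:ℝ)) = ((d:ℝ))⁻¹ by field_simp]
    abel
  -- P commutes with Sρ
  have hPS : P * Sρ = Sρ * P := by
    simp only [P, ← hU, sub_mul, mul_sub, one_mul, mul_one, Matrix.smul_mul, Matrix.mul_smul,
      hSU, hUS]
  -- Sρ is positive definite, hence invertible
  have hherm : Sρ.IsHermitian := by
    unfold Matrix.IsHermitian
    ext i j
    simp only [Sρ, Matrix.conjTranspose_apply, Matrix.add_apply, Matrix.sub_apply,
      Matrix.smul_apply, Matrix.vecMulVec_apply, Matrix.diagonal_apply, Matrix.one_apply,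
      star_trivial]
    rw [mul_comm]
    by_cases h : i = j <;> simp [h, eq_comm]
  have hpd : Sρ.PosDef := by
    refine Matrix.PosDef.of_dotProduct_mulVec_pos hherm fun x hx => ?_
    have key : x ⬝ᵥ (Sρ *ᵥ x)
        = (∑ i, pθ i * (x i)^2) - (∑ i, pθ i * x i)^2 + (1/ρ) * ∑ i, (x i)^2 := by
      simp only [Sρ, Matrix.add_mulVec, Matrix.sub_mulVec, Matrix.smul_mulVec,
        Matrix.one_mulVec, dotProduct_add, dotProduct_sub, dotProduct_smul,
        smul_eq_mul]
      congr 1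
      · congr 1
        · simp only [dotProduct, Matrix.mulVec_diagonal]
          exact Finset.sum_congr rfl fun i _ => by ring
        · simp only [dotProduct, Matrix.mulVec, Matrix.vecMulVec_apply]
          rw [sq]
          rw [Finset.sum_congr rfl (fun i _ => show x i * ∑ j, pθ i * pθ j * x j
            = (pθ i * x i) * ∑ j, pθ j * x j by
              rw [Finset.mul_sum, Finset.mul_sum]
              exact Finset.sum_congr rfl fun j _ => by ring)]
          rw [← Finset.sum_mul]
      · simp only [dotProduct, Finset.mul_sum]
        exact Finset.sum_congr rfl fun i _ => by ring
    have hcs : (∑ i, pθ i * x i)^2 ≤ ∑ i, pθ i * (x i)^2 := by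
      have h1 : ∀ i, pθ i * x i = Real.sqrt (pθ i) * (Real.sqrt (pθ i) * x i) := by
        intro i
        rw [← mul_assoc, Real.mul_self_sqrt (hp0 i)]
      have h2 := Finset.sum_mul_sq_le_sq_mul_sq Finset.univ (fun i => Real.sqrt (pθ i))
        (fun i => Real.sqrt (pθ i) * x i)
      calc (∑ i, pθ i * x i)^2 = (∑ i, Real.sqrt (pθ i) * (Real.sqrt (pθ i) * x i))^2 := by
            simp_rw [← h1]
        _ ≤ (∑ i, Real.sqrt (pθ i)^2) * ∑ i, (Real.sqrt (pθ i) * x i)^2 := h2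
        _ = ∑ i, pθ i * (x i)^2 := by
            simp_rw [mul_pow, Real.sq_sqrt (hp0 _)]
            rw [hp1, one_mul]
    have hxx : 0 < ∑ i, (x i)^2 := by
      rcases Function.ne_iff.mp hx with ⟨i, hi⟩
      have hxi : x i ≠ 0 := by simpa using hi
      exact Finset.sum_pos' (fun j _ => sq_nonneg _)
        ⟨i, Finset.mem_univ i, by positivity⟩
    have h4 : 0 < 1/ρ * ∑ i, (x i)^2 := by positivity
    simp only [star_trivial]
    rw [key]
    linarith
  have hunit : IsUnit Sρ.det := (Matrix.isUnit_iff_isUnit_det _).mp hpd.isUnit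
  have hinv1 : Sρ * Sρ⁻¹ = 1 := Matrix.mul_nonsing_inv _ hunit
  have hinv2 : Sρ⁻¹ * Sρ = 1 := Matrix.nonsing_inv_mul _ hunit
  -- P commutes with Sρ⁻¹
  have hPSi : P * Sρ⁻¹ = Sρ⁻¹ * P := by
    calc P * Sρ⁻¹ = (Sρ⁻¹ * Sρ) * (P * Sρ⁻¹) := by rw [hinv2, one_mul]
      _ = Sρ⁻¹ * ((Sρ * P) * Sρ⁻¹) := by rw [mul_assoc, ← mul_assoc Sρ P Sρ⁻¹]
      _ = Sρ⁻¹ * ((P * Sρ) * Sρ⁻¹) := by rw [hPS]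
      _ = Sρ⁻¹ * (P * (Sρ * Sρ⁻¹)) := by rw [mul_assoc P]
      _ = Sρ⁻¹ * P := by rw [hinv1, mul_one]
  have hC : C = Sρ * P := by
    show P * Sρ * P = Sρ * P
    rw [hPS, mul_assoc, hP2]
  constructor
  · show C * M * C = C
    rw [hC]
    show Sρ * P * Sρ⁻¹ * (Sρ * P) = Sρ * P
    calc Sρ * P * Sρ⁻¹ * (Sρ * P) = Sρ * (P * Sρ⁻¹) * (Sρ * P) := by rw [mul_assoc Sρ P]
      _ = Sρ * (Sρ⁻¹ * P) * (Sρ * P) := by rw [hPSi]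
      _ = (Sρ * Sρ⁻¹) * (P * (Sρ * P)) := by
            rw [← mul_assoc Sρ Sρ⁻¹ P, mul_assoc (Sρ * Sρ⁻¹) P]
      _ = P * (Sρ * P) := by rw [hinv1, one_mul]
      _ = P * Sρ * P := by rw [mul_assoc]
      _ = Sρ * P := by rw [hPS, mul_assoc, hP2]
  · show C * M * A = A
    rw [hC]
    show Sρ * P * Sρ⁻¹ * (P * J) = P * J
    calc Sρ * P * Sρ⁻¹ * (P * J) = Sρ * (P * Sρ⁻¹) * (P * J) := by rw [mul_assoc Sρ P]
      _ = Sρ * (Sρ⁻¹ * P) * (P * J) := by rw [hPSi]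
      _ = P * J := by
            rw [← mul_assoc Sρ Sρ⁻¹ P, hinv1, one_mul, ← Matrix.mul_assoc P P J, hP2]
end

section
/- Let p⁰ be a probability vector with positive entries, ρ > 0, and U ∈ ℝ^d. With Σ_ρ = Diag(p⁰) - p⁰(p⁰)ᵀ + (1/ρ)I_d, the quadratic form satisfies Uᵀ Σ_ρ^{-1} U = Σ_{i=1}^d U_i²/(p_i⁰ + 1/ρ) + (ρ / Σ_ℓ [p_ℓ⁰/(p_ℓ⁰ + 1/ρ)]) · (Σ_j [p_j⁰/(p_j⁰ + 1/ρ)] U_j)². -/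
open Matrix

theorem unprojected_statistic_closed_form (d : ℕ) (hd : 0 < d) (p : Fin d → ℝ)
    (hp0 : ∀ i, 0 < p i) (hp1 : ∑ i, p i = 1) (ρ : ℝ) (hρ : 0 < ρ) (U : Fin d → ℝ) :
    let Sρ : Matrix (Fin d) (Fin d) ℝ :=
      Matrix.diagonal p - Matrix.vecMulVec p p + (1 / ρ) • (1 : Matrix (Fin d) (Fin d) ℝ)
    U ⬝ᵥ (Sρ⁻¹ *ᵥ U) =
      (∑ i, (U i) ^ 2 / (p i + 1 / ρ)) +
        (ρ / ∑ l, p l / (p l + 1 / ρ)) * (∑ j, (p j / (p j + 1 / ρ)) * U j) ^ 2 := by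
  intro Sρ
  set a : Fin d → ℝ := fun i => p i + 1 / ρ with ha
  have haipos : ∀ i, 0 < a i := fun i => by
    have h1 := hp0 i
    simp only [ha]; positivity
  have hane : ∀ i, a i ≠ 0 := fun i => (haipos i).ne'
  set q : Fin d → ℝ := fun i => p i / a i with hq
  have hqpos : ∀ i, 0 < q i := fun i => div_pos (hp0 i) (haipos i)
  have hqa : ∀ i, q i * a i = p i := fun i => by
    simp only [hq]; exact div_mul_cancel₀ _ (hane i)
  set s : ℝ := ∑ l, q l with hs
  have hspos : 0 < s :=
    Finset.sum_pos (fun i _ => hqpos i)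
      (by simpa using Finset.univ_nonempty_iff.2 ⟨⟨0, hd⟩⟩)
  set c : ℝ := ρ / s with hc
  have hpq : ∑ i, p i * q i = 1 - s / ρ := by
    have h1 : ∀ i, p i * q i = p i - (1/ρ) * q i := by
      intro i
      calc p i * q i = (a i - 1/ρ) * q i := by simp only [ha]; ring
      _ = q i * a i - (1/ρ) * q i := by ring
      _ = p i - (1/ρ) * q i := by rw [hqa]
    rw [Finset.sum_congr rfl fun i _ => h1 i, Finset.sum_sub_distrib, hp1,
      ← Finset.mul_sum, ← hs]
    ring
  have hc1 : c * (1 - ∑ i, p i * q i) = 1 := by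
    rw [hpq, hc]
    field_simp
    ring
  have hTc : (∑ k, p k * q k) * c = c - 1 := by linear_combination -hc1
  set B : Matrix (Fin d) (Fin d) ℝ :=
    Matrix.of (fun i j => (if i = j then (a i)⁻¹ else 0) + c * q i * q j) with hB
  have hSB : Sρ * B = 1 := by
    ext i j
    have hSrow : ∀ k, Sρ i k = (if i = k then a i else 0) - p i * p k := by
      intro k
      simp only [Sρ, Matrix.add_apply, Matrix.sub_apply, Matrix.diagonal_apply,
        Matrix.vecMulVec_apply, Matrix.smul_apply, Matrix.one_apply, smul_eq_mul]
      by_cases h : i = k <;> simp [h, ha] <;> ring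
    simp only [Matrix.mul_apply, hSrow, hB, Matrix.of_apply]
    have expand : ∀ k, ((if i = k then a i else 0) - p i * p k) *
        ((if k = j then (a k)⁻¹ else 0) + c * q k * q j)
      = ((if i = k then (if k = j then a i * (a k)⁻¹ else 0) else 0)
        + (if i = k then a i * (c * q k * q j) else 0))
        - ((if k = j then p i * p k * (a k)⁻¹ else 0)
        + (p k * q k) * (p i * (c * q j))) := by
      intro k
      by_cases h1 : i = k
      · subst h1
        by_cases h2 : i = j
        · subst h2; simp; try ring
        · simp [h2]; try ring
      · by_cases h2 : k = j
        · subst h2; simp [h1]; try ring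
        · simp [h1, h2]; try ring
    rw [Finset.sum_congr rfl fun k _ => expand k]
    rw [Finset.sum_sub_distrib, Finset.sum_add_distrib, Finset.sum_add_distrib,
      Finset.sum_ite_eq, Finset.sum_ite_eq, Finset.sum_ite_eq', ← Finset.sum_mul]
    simp only [Finset.mem_univ, if_true]
    have haq : a i * q i = p i := by rw [mul_comm]; exact hqa i
    have hqj : p j * (a j)⁻¹ = q j := by
      simp only [hq]; exact (div_eq_mul_inv _ _).symm
    have hE : a i * (c * q i * q j)
        - (p i * p j * (a j)⁻¹ + (∑ k, p k * q k) * (p i * (c * q j))) = 0 := by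
      linear_combination (c * q j) * haq - p i * hqj - (p i * q j) * hTc
    rw [Matrix.one_apply]
    by_cases h : i = j
    · subst h
      rw [if_pos rfl, if_pos rfl, mul_inv_cancel₀ (hane i)]
      linarith [hE]
    · rw [if_neg h, if_neg h]
      linarith [hE]
  have hinv : Sρ⁻¹ = B := Matrix.inv_eq_right_inv hSB
  rw [hinv]
  have hmv : ∀ i, (B *ᵥ U) i = (a i)⁻¹ * U i + c * q i * (∑ j, q j * U j) := by
    intro i
    simp only [Matrix.mulVec, dotProduct, hB, Matrix.of_apply, add_mul,
      ite_mul, zero_mul]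
    rw [Finset.sum_add_distrib, Finset.sum_ite_eq]
    simp only [Finset.mem_univ, if_true]
    rw [Finset.mul_sum]
    congr 1
    apply Finset.sum_congr rfl
    intro j _
    ring
  simp only [dotProduct, hmv]
  rw [Finset.sum_congr rfl
    (fun i (_ : i ∈ Finset.univ) => (mul_add (U i) _ _ :
      U i * ((a i)⁻¹ * U i + c * q i * (∑ j, q j * U j)) = _)),
    Finset.sum_add_distrib]
  congr 1
  · apply Finset.sum_congr rfl
    intro i _
    rw [div_eq_mul_inv]; ring
  · have h1 : ∀ i, U i * (c * q i * ∑ j, q j * U j)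
        = c * (∑ j, q j * U j) * (q i * U i) := by intro i; ring
    rw [Finset.sum_congr rfl fun i _ => h1 i, ← Finset.mul_sum]
    simp only [hc, hs, hq, ha]
    ring
end
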